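/- In any implication semigroup, the distinguished element ω is a central idempotent: ω·ω = ω and ω·x = x·ω for all x ∈ S. -/
import Mathlib


theorem stmt_3 {S : Type*} [Semigroup S] (ω : S)
    (h1 : ∀ x y z : S, x * y * z = z * ω * x * y * z * ω * ω)
    (h2 : ω * ω * ω = ω) :
    ω * ω = ω ∧ ∀ x : S, ω * x = x * ω := by
  have h2' : ω * (ω * ω) = ω := by rw [← mul_assoc]; exact h2
  have idem : ω * ω = ω := by
    have h := h1 (ω * ω) (ω * ω) (ω * ω)
    simp only [mul_assoc, h2'] at h
    exact h
  have habs : ∀ x : S, ω * (ω * x) = ω * x := by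
    intro x; rw [← mul_assoc, idem]
  have hC : ∀ z : S, z * ω = ω * (z * ω) := by
    intro z
    have h := h1 z ω ω
    simp only [mul_assoc, idem, habs] at h
    exact h
  have hB : ∀ z : S, ω * z = z * (ω * (z * ω)) := by
    intro z
    have h := h1 ω ω z
    simp only [mul_assoc, idem, habs] at h
    exact h
  refine ⟨idem, fun z => ?_⟩
  set a := z * ω with ha
  have haw : a * ω = a := by rw [ha, mul_assoc, idem]
  have hwa : ω * a = a := (hC z).symm
  have haa : a * a = a := by
    have h := hB a
    rw [haw, hwa] at h
    exact h.symm
  rw [hB z, ← mul_assoc]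
  exact haa
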